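/- For all n, d ≥ 2, H_clm(n,d) ≤ n^{log₂ d + 1} − 1 (Kalai–Kleitman-type bound for connected layer multicomplexes). -/

import Mathlib

/-- `IsCLM n d a b L` : the layers `L a, …, L b` form a connected layer multicomplex
of rank `d` on `n` elements. The facets (size-`d` multisets of `[n]`) are partitioned
into the nonempty layers `L a, …, L b`, and for every multiset `S` the set of layers
whose star contains `S` is an interval. -/
def IsCLM (n d : ℕ) (a b : ℤ) (L : ℤ → Set (Multiset (Fin n))) : Prop :=
  a ≤ b ∧
  (∀ i X, X ∈ L i → Multiset.card X = d) ∧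
  (∀ i, (L i).Nonempty ↔ a ≤ i ∧ i ≤ b) ∧
  (∀ i j X, X ∈ L i → X ∈ L j → i = j) ∧
  (∀ (S : Multiset (Fin n)) (i j k : ℤ), i ≤ j → j ≤ k →
    (∃ X ∈ L i, S ≤ X) → (∃ X ∈ L k, S ≤ X) → ∃ X ∈ L j, S ≤ X)

/-- `Hclm n d` : the maximum length of connected layer multicomplexes of rank `d`
on `n` elements. -/
noncomputable def Hclm (n d : ℕ) : ℕ :=
  sSup {l | ∃ (a b : ℤ) (L : ℤ → Set (Multiset (Fin n))),
    IsCLM n d a b L ∧ (b - a).toNat = l}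

namespace KKaux

/-- Restriction to a subinterval of layers. -/
lemma isCLM_restrict {n d : ℕ} {a b a' b' : ℤ} {L : ℤ → Set (Multiset (Fin n))}
    (h : IsCLM n d a b L) (h1 : a ≤ a') (h2 : a' ≤ b') (h3 : b' ≤ b) :
    IsCLM n d a' b' (fun i => if a' ≤ i ∧ i ≤ b' then L i else ∅) := by
  obtain ⟨hab, hcard, hne, hdisj, hconn⟩ := h
  refine ⟨h2, ?_, ?_, ?_, ?_⟩
  · intro i X hX
    by_cases hi : a' ≤ i ∧ i ≤ b'
    · exact hcard i X (by simpa [hi] using hX)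
    · simp [hi] at hX
  · intro i
    by_cases hi : a' ≤ i ∧ i ≤ b'
    · simp only [if_pos hi]
      exact ⟨fun _ => hi, fun _ => (hne i).2 ⟨le_trans h1 hi.1, le_trans hi.2 h3⟩⟩
    · simp only [if_neg hi]
      exact ⟨fun hh => (Set.not_nonempty_empty hh).elim, fun hh => (hi hh).elim⟩
  · intro i j X hXi hXj
    by_cases hi : a' ≤ i ∧ i ≤ b'
    · by_cases hj : a' ≤ j ∧ j ≤ b'
      · exact hdisj i j X (by simpa [hi] using hXi) (by simpa [hj] using hXj)
      · simp [hj] at hXj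
    · simp [hi] at hXi
  · intro S i j k hij hjk hi hk
    by_cases hi' : a' ≤ i ∧ i ≤ b'
    · by_cases hk' : a' ≤ k ∧ k ≤ b'
      · have hj' : a' ≤ j ∧ j ≤ b' := ⟨le_trans hi'.1 hij, le_trans hjk hk'.2⟩
        simp only [hi', hk', hj', and_self, if_true] at *
        exact hconn S i j k hij hjk hi hk
      · simp only [hk', if_false] at hk
        obtain ⟨X, hX, _⟩ := hk
        simp at hX
    · simp only [hi', if_false] at hi
      obtain ⟨X, hX, _⟩ := hi
      simp at hX

/-- The link construction: restrict to facets containing `e`, delete `e`. -/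
lemma isCLM_link {n d : ℕ} {a b : ℤ} {L : ℤ → Set (Multiset (Fin n))}
    (h : IsCLM n d a b L) (hd : 1 ≤ d) (e : Fin n)
    (hne : ∃ i X, X ∈ L i ∧ e ∈ X) :
    ∃ p q, IsCLM n (d - 1) p q (fun i => {Y | e ::ₘ Y ∈ L i}) ∧
      (∀ i, (∃ X ∈ L i, e ∈ X) → p ≤ i ∧ i ≤ q) := by
  obtain ⟨hab, hcard, hnel, hdisj, hconn⟩ := h
  set I : ℤ → Prop := fun i => ∃ X ∈ L i, e ∈ X with hI
  have hIab : ∀ i, I i → a ≤ i ∧ i ≤ b := by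
    intro i ⟨X, hX, _⟩
    exact (hnel i).1 ⟨X, hX⟩
  have hInh : ∃ i, I i := by
    obtain ⟨i, X, hX, heX⟩ := hne; exact ⟨i, X, hX, heX⟩
  obtain ⟨q, hqI, hqub⟩ := Int.exists_greatest_of_bdd ⟨b, fun z hz => (hIab z hz).2⟩ hInh
  obtain ⟨p, hpI, hplb⟩ := Int.exists_least_of_bdd ⟨a, fun z hz => (hIab z hz).1⟩ hInh
  have hpq : p ≤ q := hplb q hqI
  refine ⟨p, q, ⟨hpq, ?_, ?_, ?_, ?_⟩, fun i hi => ⟨hplb i hi, hqub i hi⟩⟩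
  · intro i Y hY
    have := hcard i _ hY
    simp only [Multiset.card_cons] at this
    omega
  · intro i
    constructor
    · rintro ⟨Y, hY⟩
      have : I i := ⟨e ::ₘ Y, hY, Multiset.mem_cons_self e Y⟩
      exact ⟨hplb i this, hqub i this⟩
    · rintro ⟨hpi, hiq⟩
      obtain ⟨Xp, hXp, heXp⟩ := hpI
      obtain ⟨Xq, hXq, heXq⟩ := hqI
      obtain ⟨X, hX, heX⟩ := hconn {e} p i q hpi hiq
        ⟨Xp, hXp, Multiset.singleton_le.2 heXp⟩ ⟨Xq, hXq, Multiset.singleton_le.2 heXq⟩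
      have heX' : e ∈ X := Multiset.singleton_le.1 heX
      exact ⟨X.erase e, by simpa [Multiset.cons_erase heX'] using hX⟩
  · intro i j Y hYi hYj
    exact hdisj i j _ hYi hYj
  · intro S i j k hij hjk hi hk
    obtain ⟨Y, hY, hSY⟩ := hi
    obtain ⟨Z, hZ, hSZ⟩ := hk
    obtain ⟨X, hX, hX'⟩ := hconn (e ::ₘ S) i j k hij hjk
      ⟨e ::ₘ Y, hY, Multiset.cons_le_cons e hSY⟩
      ⟨e ::ₘ Z, hZ, Multiset.cons_le_cons e hSZ⟩
    have heX : e ∈ X := Multiset.mem_of_le hX' (Multiset.mem_cons_self e S)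
    refine ⟨X.erase e, by simpa [Multiset.cons_erase heX] using hX, ?_⟩
    have := Multiset.erase_le_erase e hX'
    simpa using this

/-- Relabeling lemma : if every facet of a CLM on `Fin n` has its elements in a
set `T` of at most `m ≥ 1` elements, we get a CLM on `Fin m` with the same layers. -/
lemma isCLM_relabel {n m d : ℕ} {a b : ℤ} {L : ℤ → Set (Multiset (Fin n))}
    (h : IsCLM n d a b L) (hd : 1 ≤ d) (hm : 1 ≤ m) (T : Finset (Fin n)) (hT : T.card ≤ m)
    (hsupp : ∀ i X, X ∈ L i → ∀ x ∈ X, x ∈ T) :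
    ∃ L' : ℤ → Set (Multiset (Fin m)), IsCLM m d a b L' := by
  classical
  obtain ⟨hab, hcard, hnel, hdisj, hconn⟩ := h
  -- T is nonempty
  obtain ⟨Xa, hXa⟩ := (hnel a).2 ⟨le_refl a, hab⟩
  have hXane : Xa ≠ 0 := by
    intro h0
    have := hcard a Xa hXa
    rw [h0] at this
    simp at this
    omega
  obtain ⟨x0, hx0⟩ := Multiset.exists_mem_of_ne_zero hXane
  have hTne : T.Nonempty := ⟨x0, hsupp a Xa hXa x0 hx0⟩
  haveI : Nonempty {x // x ∈ T} := ⟨⟨hTne.choose, hTne.choose_spec⟩⟩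
  obtain ⟨f⟩ : Nonempty ({x // x ∈ T} ↪ Fin m) := by
    apply Function.Embedding.nonempty_of_card_le
    simpa [Fintype.card_coe] using hT
  set g : Fin n → Fin m := fun x => if hx : x ∈ T then f ⟨x, hx⟩ else ⟨0, hm⟩ with hg
  set g' : Fin m → Fin n := fun z => ((Function.invFun (fun x : {x // x ∈ T} => f x) z : {x // x ∈ T}) : Fin n) with hg'
  have hinv : ∀ x ∈ T, g' (g x) = x := by
    intro x hx
    have : g x = f ⟨x, hx⟩ := by simp [hg, hx]
    rw [this, hg']
    have := Function.leftInverse_invFun f.injective ⟨x, hx⟩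
    simp [this]
  -- map roundtrips on multisets with support in T
  have hmap : ∀ X : Multiset (Fin n), (∀ x ∈ X, x ∈ T) → (X.map g).map g' = X := by
    intro X hX
    rw [Multiset.map_map]
    rw [show Multiset.map (g' ∘ g) X = Multiset.map id X from
      Multiset.map_congr rfl (fun x hx => hinv x (hX x hx))]
    simp
  refine ⟨fun i => (Multiset.map g) '' (L i), hab, ?_, ?_, ?_, ?_⟩
  · rintro i Y ⟨X, hX, rfl⟩
    simpa using hcard i X hX
  · intro i
    rw [Set.image_nonempty]
    exact hnel i
  · rintro i j Y ⟨X, hX, rfl⟩ ⟨X', hX', hXX'⟩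
    have : X' = X := by
      have := congrArg (Multiset.map g') hXX'
      rwa [hmap X' (hsupp j X' hX'), hmap X (hsupp i X hX)] at this
    exact hdisj i j X hX (this ▸ hX')
  · rintro S i j k hij hjk ⟨Y, ⟨X, hX, rfl⟩, hSY⟩ ⟨Z, ⟨W, hW, rfl⟩, hSZ⟩
    -- pull back S
    have hSX : S.map g' ≤ X := by
      have := Multiset.map_le_map (f := g') hSY
      rwa [hmap X (hsupp i X hX)] at this
    have hSW : S.map g' ≤ W := by
      have := Multiset.map_le_map (f := g') hSZ
      rwa [hmap W (hsupp k W hW)] at this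
    have hSgg : (S.map g').map g = S := by
      rw [Multiset.map_map]
      rw [show Multiset.map (g ∘ g') S = Multiset.map id S from
        Multiset.map_congr rfl ?_]
      · simp
      · intro y hy
        have hyX : y ∈ Multiset.map g X := Multiset.mem_of_le hSY hy
        obtain ⟨x, hx, rfl⟩ := Multiset.mem_map.1 hyX
        have hxT : x ∈ T := hsupp i X hX x hx
        simp [Function.comp, hinv x hxT]
    obtain ⟨X', hX', hSX'⟩ := hconn (S.map g') i j k hij hjk ⟨X, hX, hSX⟩ ⟨W, hW, hSW⟩
    refine ⟨X'.map g, ⟨X', hX', rfl⟩, ?_⟩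
    calc S = (S.map g').map g := hSgg.symm
    _ ≤ X'.map g := Multiset.map_le_map hSX'

/-- Counting bound for rank 1. -/
lemma d_one_bound {n : ℕ} {a b : ℤ} {L : ℤ → Set (Multiset (Fin n))} (hn : 1 ≤ n)
    (h : IsCLM n 1 a b L) : b - a + 1 ≤ (n : ℤ) := by
  classical
  obtain ⟨hab, hcard, hnel, hdisj, hconn⟩ := h
  haveI : NeZero n := ⟨by omega⟩
  set φ : ℤ → Fin n := fun i =>
    if hi : (L i).Nonempty then
      (Multiset.card_eq_one.1 (hcard i hi.choose hi.choose_spec)).choose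
    else 0 with hφ
  have hφ_mem : ∀ i, a ≤ i → i ≤ b → ({φ i} : Multiset (Fin n)) ∈ L i := by
    intro i h1 h2
    have hi : (L i).Nonempty := (hnel i).2 ⟨h1, h2⟩
    have := (Multiset.card_eq_one.1 (hcard i hi.choose hi.choose_spec)).choose_spec
    simp only [hφ, hi, dif_pos]
    rw [← this]
    exact hi.choose_spec
  have hinj : Set.InjOn φ (Finset.Icc a b : Set ℤ) := by
    intro i hi j hj hij
    simp only [Finset.coe_Icc, Set.mem_Icc] at hi hj
    have h1 := hφ_mem i hi.1 hi.2
    have h2 := hφ_mem j hj.1 hj.2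
    rw [hij] at h1
    exact hdisj i j _ h1 h2
  have := Finset.card_le_card_of_injOn φ (fun x _ => Finset.mem_univ (φ x)) hinj
  rw [Int.card_Icc] at this
  simp only [Finset.card_univ, Fintype.card_fin] at this
  omega

/-- On one element, a CLM has exactly one layer. -/
lemma n_one_bound {d : ℕ} {a b : ℤ} {L : ℤ → Set (Multiset (Fin 1))}
    (h : IsCLM 1 d a b L) : b = a := by
  obtain ⟨hab, hcard, hnel, hdisj, hconn⟩ := h
  obtain ⟨X, hX⟩ := (hnel a).2 ⟨le_refl a, hab⟩
  obtain ⟨Y, hY⟩ := (hnel b).2 ⟨hab, le_refl b⟩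
  have hXY : X = Y := by
    have h1 : X = Multiset.replicate d 0 := by
      rw [← hcard a X hX]
      exact Multiset.eq_replicate_card.2 (fun c _ => Subsingleton.elim c 0)
    have h2 : Y = Multiset.replicate d 0 := by
      rw [← hcard b Y hY]
      exact Multiset.eq_replicate_card.2 (fun c _ => Subsingleton.elim c 0)
    rw [h1, h2]
  exact (hdisj a b X hX (hXY ▸ hY)).symm

/-- The Kalai–Kleitman recursion step. -/
lemma recursion_step {n d : ℕ} {a b : ℤ} {L : ℤ → Set (Multiset (Fin n))}
    (hn : 2 ≤ n) (hd : 2 ≤ d) (h : IsCLM n d a b L) (K1 K2 K3 : ℤ)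
    (hK1 : 0 ≤ K1) (hK2 : 0 ≤ K2) (hK3 : 0 ≤ K3)
    (h1 : ∀ a' b' L', IsCLM (n / 2) d a' b' L' → b' - a' + 1 ≤ K1)
    (h2 : ∀ a' b' L', IsCLM ((n - 1) / 2) d a' b' L' → b' - a' + 1 ≤ K2)
    (h3 : ∀ a' b' L', IsCLM n (d - 1) a' b' L' → b' - a' + 1 ≤ K3) :
    b - a + 1 ≤ K1 + K2 + K3 := by
  classical
  obtain ⟨hab, hcard, hnel, hdisj, hconn⟩ := h
  have hCLM : IsCLM n d a b L := ⟨hab, hcard, hnel, hdisj, hconn⟩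
  set U : ℤ → Finset (Fin n) :=
    fun i => Finset.univ.filter (fun x => ∃ j, a ≤ j ∧ j ≤ i ∧ ∃ X ∈ L j, x ∈ X) with hU
  set V : ℤ → Finset (Fin n) :=
    fun i => Finset.univ.filter (fun x => ∃ j, i ≤ j ∧ j ≤ b ∧ ∃ X ∈ L j, x ∈ X) with hV
  -- greatest i* with small left support
  obtain ⟨i₀, hi₀, hi₀ub⟩ := Int.exists_greatest_of_bdd
    (P := fun i => a - 1 ≤ i ∧ i ≤ b ∧ (U i).card ≤ n / 2)
    ⟨b, fun z hz => hz.2.1⟩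
    ⟨a - 1, le_refl _, by omega, by
      have : U (a - 1) = ∅ := by
        rw [hU]
        ext x
        simp only [Finset.mem_filter, Finset.mem_univ, true_and, Finset.notMem_empty,
          iff_false, not_exists]
        intro j hj
        omega
      simp [this]⟩
  obtain ⟨j₀, hj₀, hj₀lb⟩ := Int.exists_least_of_bdd
    (P := fun j => a ≤ j ∧ j ≤ b + 1 ∧ (V j).card ≤ (n - 1) / 2)
    ⟨a, fun z hz => hz.1⟩
    ⟨b + 1, by omega, le_refl _, by
      have : V (b + 1) = ∅ := by
        rw [hV]
        ext x
        simp only [Finset.mem_filter, Finset.mem_univ, true_and, Finset.notMem_empty,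
          iff_false, not_exists]
        intro j hj
        omega
      simp [this]⟩
  -- Left part
  have hleft : i₀ - a + 1 ≤ K1 := by
    rcases lt_or_ge i₀ a with hc | hc
    · omega
    · have hres := isCLM_restrict hCLM (le_refl a) hc hi₀.2.1
      obtain ⟨L', hL'⟩ := isCLM_relabel hres (by omega) (by omega) (U i₀) hi₀.2.2
        (by
          intro t X hX x hx
          by_cases ht : a ≤ t ∧ t ≤ i₀
          · simp only [ht, and_self, if_true] at hX
            rw [hU]
            simp only [Finset.mem_filter, Finset.mem_univ, true_and]
            exact ⟨t, ht.1, ht.2, X, hX, hx⟩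
          · simp [ht] at hX)
      exact h1 a i₀ L' hL'
  -- Right part
  have hright : b - j₀ + 1 ≤ K2 := by
    rcases lt_or_ge b j₀ with hc | hc
    · omega
    · have hres := isCLM_restrict hCLM hj₀.1 hc (le_refl b)
      have hm2 : 1 ≤ (n - 1) / 2 := by
        by_contra hm
        have hV0 : (V j₀).card = 0 := by omega
        obtain ⟨X, hX⟩ := (hnel j₀).2 ⟨hj₀.1, hc⟩
        have hXne : X ≠ 0 := by
          intro h0
          have := hcard j₀ X hX
          rw [h0] at this
          simp at this
          omega
        obtain ⟨x, hx⟩ := Multiset.exists_mem_of_ne_zero hXne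
        have : x ∈ V j₀ := by
          rw [hV]
          simp only [Finset.mem_filter, Finset.mem_univ, true_and]
          exact ⟨j₀, le_refl _, hc, X, hX, hx⟩
        rw [Finset.card_eq_zero.1 hV0] at this
        simp at this
      obtain ⟨L', hL'⟩ := isCLM_relabel hres (by omega) hm2 (V j₀) hj₀.2.2
        (by
          intro t X hX x hx
          by_cases ht : j₀ ≤ t ∧ t ≤ b
          · simp only [ht, and_self, if_true] at hX
            rw [hV]
            simp only [Finset.mem_filter, Finset.mem_univ, true_and]
            exact ⟨t, ht.1, ht.2, X, hX, hx⟩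
          · simp [ht] at hX)
      exact h2 j₀ b L' hL'
  -- Middle part
  have hmid : j₀ - i₀ - 1 ≤ K3 := by
    rcases lt_or_ge (j₀ - 1) (i₀ + 1) with hc | hc
    · omega
    · -- i₀ + 1 ≤ j₀ - 1 ≤ b, so U (i₀+1) is big; similarly V (j₀-1) is big
      have hi1b : i₀ + 1 ≤ b := by omega
      have hUbig : n / 2 + 1 ≤ (U (i₀ + 1)).card := by
        by_contra hcon
        have : i₀ + 1 ≤ i₀ := hi₀ub (i₀ + 1) ⟨by omega, hi1b, by omega⟩
        omega
      have hVbig : (n - 1) / 2 + 1 ≤ (V (j₀ - 1)).card := by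
        by_contra hcon
        have : j₀ ≤ j₀ - 1 := hj₀lb (j₀ - 1) ⟨by omega, by omega, by omega⟩
        omega
      -- they intersect
      have hinter : (U (i₀ + 1) ∩ V (j₀ - 1)).Nonempty := by
        rw [← Finset.card_pos]
        have hcup := Finset.card_union_add_card_inter (U (i₀ + 1)) (V (j₀ - 1))
        have hle : (U (i₀ + 1) ∪ V (j₀ - 1)).card ≤ n := by
          have := Finset.card_le_univ (U (i₀ + 1) ∪ V (j₀ - 1))
          simpa using this
        omega
      obtain ⟨e, he⟩ := hinter
      rw [Finset.mem_inter] at he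
      obtain ⟨heU, heV⟩ := he
      rw [hU] at heU
      simp only [Finset.mem_filter, Finset.mem_univ, true_and] at heU
      obtain ⟨t, hat, hti, X, hX, heX⟩ := heU
      rw [hV] at heV
      simp only [Finset.mem_filter, Finset.mem_univ, true_and] at heV
      obtain ⟨t', hjt', ht'b, X', hX', heX'⟩ := heV
      obtain ⟨p, q, hlink, hpq⟩ := isCLM_link hCLM (by omega) e ⟨t, X, hX, heX⟩
      have h1' := hpq t ⟨X, hX, heX⟩
      have h2' := hpq t' ⟨X', hX', heX'⟩
      have := h3 p q _ hlink
      omega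
  omega

lemma numeric_bound (n d : ℕ) (hn : 2 ≤ n) (hd : 2 ≤ d) :
    (d - 2 ^ Nat.log 2 d + 1) *
      ((n / 2) ^ (Nat.log 2 d + 1) + ((n - 1) / 2) ^ (Nat.log 2 d + 1)) +
      n ^ Nat.log 2 d ≤ n ^ (Nat.log 2 d + 1) := by
  set L := Nat.log 2 d with hL
  have hdlow : 2 ^ L ≤ d := Nat.pow_log_le_self 2 (by omega)
  have hdhigh : d < 2 ^ (L + 1) := Nat.lt_pow_succ_log_self (by norm_num) d
  have hpow : (2 : ℕ) ^ (L + 1) = 2 * 2 ^ L := by ring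
  have hc : d - 2 ^ L + 1 ≤ 2 ^ L := by omega
  set m1 := n / 2 with hm1
  set m2 := (n - 1) / 2 with hm2
  have hsum : 2 * m1 + 2 * m2 + 2 = 2 * n := by omega
  have h2m1 : 2 * m1 ≤ n := by omega
  have h2m2 : 2 * m2 ≤ n := by omega
  -- key : 2^(L+1) * m^(L+1) = (2m)^(L+1) ≤ (2m) * n^L
  have key : ∀ m : ℕ, 2 * m ≤ n → 2 ^ (L + 1) * m ^ (L + 1) ≤ (2 * m) * n ^ L := by
    intro m hm
    rw [← mul_pow]
    calc (2 * m) ^ (L + 1) = (2 * m) * (2 * m) ^ L := by ring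
    _ ≤ (2 * m) * n ^ L := by
      apply Nat.mul_le_mul_left
      exact Nat.pow_le_pow_left hm L
  have main2 : 2 * ((d - 2 ^ L + 1) * (m1 ^ (L + 1) + m2 ^ (L + 1)) + n ^ L)
      ≤ 2 * n ^ (L + 1) := by
    have step1 : 2 * ((d - 2 ^ L + 1) * (m1 ^ (L + 1) + m2 ^ (L + 1)))
        ≤ 2 * (2 ^ L * (m1 ^ (L + 1) + m2 ^ (L + 1))) :=
      Nat.mul_le_mul_left 2 (Nat.mul_le_mul_right _ hc)
    have step2 : 2 * (2 ^ L * (m1 ^ (L + 1) + m2 ^ (L + 1)))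
        = 2 ^ (L + 1) * m1 ^ (L + 1) + 2 ^ (L + 1) * m2 ^ (L + 1) := by ring
    have step3 : 2 ^ (L + 1) * m1 ^ (L + 1) + 2 ^ (L + 1) * m2 ^ (L + 1)
        ≤ (2 * m1) * n ^ L + (2 * m2) * n ^ L :=
      Nat.add_le_add (key m1 h2m1) (key m2 h2m2)
    have step4 : (2 * m1) * n ^ L + (2 * m2) * n ^ L + 2 * n ^ L
        = (2 * m1 + 2 * m2 + 2) * n ^ L := by ring
    have step5 : (2 * m1 + 2 * m2 + 2) * n ^ L = 2 * n ^ (L + 1) := by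
      rw [hsum]; ring
    omega
  omega

/-- The main induction: for `d ≥ 1` and any CLM,
`b - a + 1 ≤ n ^ (log₂ d + 1)`. -/
lemma master : ∀ n d : ℕ, 1 ≤ d → ∀ (a b : ℤ) (L : ℤ → Set (Multiset (Fin n))),
    IsCLM n d a b L → b - a + 1 ≤ ((n ^ (Nat.log 2 d + 1) : ℕ) : ℤ) := by
  intro n
  induction n using Nat.strong_induction_on with
  | _ n IHn =>
  intro d hd a b L h
  rcases Nat.lt_or_ge n 1 with hn0 | hn1
  · -- n = 0 : vacuous
    exfalso
    obtain ⟨hab, hcard, hnel, _, _⟩ := h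
    obtain ⟨X, hX⟩ := (hnel a).2 ⟨le_refl a, hab⟩
    have h1 := hcard a X hX
    have hXne : X ≠ 0 := by
      intro h0
      rw [h0] at h1
      simp at h1
      omega
    obtain ⟨x, -⟩ := Multiset.exists_mem_of_ne_zero hXne
    have hn0 : n = 0 := by omega
    subst hn0
    exact x.elim0
  rcases Nat.lt_or_ge n 2 with hn1' | hn2
  · -- n = 1
    have hn : n = 1 := by omega
    subst hn
    have := n_one_bound h
    have hpos : 1 ≤ ((1 : ℕ) ^ (Nat.log 2 d + 1) : ℕ) := by simp
    omega
  -- n ≥ 2 : inner strong induction on d, with the strengthened bound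
  · have inner : ∀ d : ℕ, 2 ≤ d → ∀ (a b : ℤ) (L : ℤ → Set (Multiset (Fin n))),
        IsCLM n d a b L →
        b - a + 1 ≤ (((d - 2 ^ Nat.log 2 d + 1) *
          ((n / 2) ^ (Nat.log 2 d + 1) + ((n - 1) / 2) ^ (Nat.log 2 d + 1)) +
          n ^ Nat.log 2 d : ℕ) : ℤ) := by
      intro d
      induction d using Nat.strong_induction_on with
      | _ d IHd =>
      intro hd2 a b L h
      set Lg := Nat.log 2 d with hLg
      have hLg1 : 1 ≤ Lg := Nat.log_pos (by norm_num) hd2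
      have hdlow : 2 ^ Lg ≤ d := Nat.pow_log_le_self 2 (by omega)
      have hdhigh : d < 2 ^ (Lg + 1) := Nat.lt_pow_succ_log_self (by norm_num) d
      set M1 := (n / 2) ^ (Lg + 1) with hM1
      set M2 := ((n - 1) / 2) ^ (Lg + 1) with hM2
      -- bounds for the two side parts (outer induction on n)
      have h1 : ∀ a' b' L', IsCLM (n / 2) d a' b' L' →
          b' - a' + 1 ≤ ((M1 : ℕ) : ℤ) :=
        fun a' b' L' h' => IHn (n / 2) (by omega) d (by omega) a' b' L' h'
      have h2 : ∀ a' b' L', IsCLM ((n - 1) / 2) d a' b' L' →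
          b' - a' + 1 ≤ ((M2 : ℕ) : ℤ) :=
        fun a' b' L' h' => IHn ((n - 1) / 2) (by omega) d (by omega) a' b' L' h'
      rcases Nat.lt_or_ge (2 ^ Lg) d with hcase | hcase
      · -- 2^Lg < d : use the strengthened inner IH at d - 1, log (d-1) = Lg
        have hd12 : 2 ≤ d - 1 := by omega
        have hlog : Nat.log 2 (d - 1) = Lg := by
          apply Nat.log_eq_of_pow_le_of_lt_pow
          · omega
          · omega
        have h3 : ∀ a' b' L', IsCLM n (d - 1) a' b' L' →
            b' - a' + 1 ≤ ((((d - 1) - 2 ^ Lg + 1) * (M1 + M2) + n ^ Lg : ℕ) : ℤ) := by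
          intro a' b' L' h'
          have := IHd (d - 1) (by omega) hd12 a' b' L' h'
          rwa [hlog] at this
        have hrec := recursion_step hn2 hd2 h
          ((M1 : ℕ) : ℤ) ((M2 : ℕ) : ℤ)
          ((((d - 1) - 2 ^ Lg + 1) * (M1 + M2) + n ^ Lg : ℕ) : ℤ)
          (by positivity) (by positivity) (by positivity) h1 h2 h3
        have harith : (M1 : ℤ) + (M2 : ℤ) + ((((d - 1) - 2 ^ Lg + 1) * (M1 + M2) + n ^ Lg : ℕ) : ℤ)
            = (((d - 2 ^ Lg + 1) * (M1 + M2) + n ^ Lg : ℕ) : ℤ) := by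
          have e1 : d - 1 - 2 ^ Lg + 1 = d - 2 ^ Lg := by omega
          rw [e1]
          push_cast
          ring
        calc b - a + 1 ≤ _ := hrec
        _ = _ := harith
      · -- d = 2^Lg : coefficient is 1, use the plain bound n^Lg for rank d-1
        have hdeq : d = 2 ^ Lg := by omega
        have h3 : ∀ a' b' L', IsCLM n (d - 1) a' b' L' →
            b' - a' + 1 ≤ ((n ^ Lg : ℕ) : ℤ) := by
          intro a' b' L' h'
          rcases Nat.lt_or_ge (d - 1) 2 with hd1 | hd1
          · -- d - 1 = 1, so d = 2, Lg = 1
            have hd1' : d - 1 = 1 := by omega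
            have hLg1' : Lg = 1 := by
              have : d = 2 := by omega
              rw [hLg, this]
              exact Nat.log_eq_of_pow_le_of_lt_pow (by norm_num) (by norm_num)
            rw [hd1'] at h'
            have := d_one_bound (by omega) h'
            rw [hLg1']
            simpa using this
          · have hlog : Nat.log 2 (d - 1) = Lg - 1 := by
              apply Nat.log_eq_of_pow_le_of_lt_pow
              · have : 2 ^ (Lg - 1 + 1) = 2 * 2 ^ (Lg - 1) := by ring
                have h2 : 2 ^ (Lg - 1 + 1) = 2 ^ Lg := by
                  congr 1; omega
                omega
              · have h2 : Lg - 1 + 1 = Lg := by omega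
                rw [h2]; omega
            have hstep := IHd (d - 1) (by omega) hd1 a' b' L' h'
            have hnum := numeric_bound n (d - 1) hn2 hd1
            have heq : Nat.log 2 (d - 1) + 1 = Lg := by omega
            calc b' - a' + 1 ≤ _ := hstep
            _ ≤ ((n ^ (Nat.log 2 (d - 1) + 1) : ℕ) : ℤ) := by exact_mod_cast hnum
            _ = ((n ^ Lg : ℕ) : ℤ) := by rw [heq]
        have hrec := recursion_step hn2 hd2 h
          ((M1 : ℕ) : ℤ) ((M2 : ℕ) : ℤ) ((n ^ Lg : ℕ) : ℤ)
          (by positivity) (by positivity) (by positivity) h1 h2 h3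
        have hco : d - 2 ^ Lg + 1 = 1 := by omega
        have harith : (M1 : ℤ) + (M2 : ℤ) + ((n ^ Lg : ℕ) : ℤ)
            = (((d - 2 ^ Lg + 1) * (M1 + M2) + n ^ Lg : ℕ) : ℤ) := by
          rw [hco]
          push_cast
          ring
        calc b - a + 1 ≤ _ := hrec
        _ = _ := harith
    -- export : plain bound from the strengthened inner bound
    rcases Nat.lt_or_ge d 2 with hd1 | hd2
    · -- d = 1
      have hd1' : d = 1 := by omega
      subst hd1'
      have := d_one_bound (by omega) h
      simpa [Nat.log_one_right] using this
    · have hstep := inner d hd2 a b L h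
      have hnum := numeric_bound n d hn2 hd2
      calc b - a + 1 ≤ _ := hstep
      _ ≤ ((n ^ (Nat.log 2 d + 1) : ℕ) : ℤ) := by exact_mod_cast hnum

end KKaux

/-- Kalai–Kleitman-type bound: for all `n, d ≥ 2`,
`H_clm(n,d) ≤ n^{log₂ d + 1} − 1`. -/
theorem Hclm_kalai_kleitman (n d : ℕ) (hn : 2 ≤ n) (hd : 2 ≤ d) :
    Hclm n d ≤ n ^ (Nat.log 2 d + 1) - 1 := by
  apply csSup_le'
  rintro l ⟨a, b, L, hL, rfl⟩
  have hm := KKaux.master n d (by omega) a b L hL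
  have hab : a ≤ b := hL.1
  have hpos : 1 ≤ n ^ (Nat.log 2 d + 1) := Nat.one_le_pow _ _ (by omega)
  rw [Int.toNat_le]
  have : ((n ^ (Nat.log 2 d + 1) - 1 : ℕ) : ℤ) = ((n ^ (Nat.log 2 d + 1) : ℕ) : ℤ) - 1 := by
    omega
  rw [this]
  omega
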